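/- Let K be a field of characteristic not 2, b a regular symmetric bilinear form on a finite-dimensional K-vector space V, and u ∈ GL(V) a b-isometry with u − id nilpotent. Then for every natural number k, the rank of (u − id)^{2k+1} is even. -/

import Mathlib

open Module Submodule

lemma even_finrank_of_alt_nondeg {K : Type*} [Field K] (n : ℕ) :
    ∀ {V : Type*} [AddCommGroup V] [Module K V] [FiniteDimensional K V]
    (S : LinearMap.BilinForm K V), S.IsAlt → S.Nondegenerate →
    Module.finrank K V = n → Even n := by
  induction n using Nat.strong_induction_on with
  | _ n IH =>
    intro V _ _ _ S halt hnd hdim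
    rcases Nat.eq_zero_or_pos n with h0 | hpos
    · simp [h0]
    have : Nontrivial V := by
      rw [← Module.finrank_pos_iff (R := K), hdim]; exact hpos
    obtain ⟨x, hx⟩ := exists_ne (0 : V)
    have hex : ¬ ∀ y, S x y = 0 := fun h => hx (hnd.1 x h)
    push_neg at hex
    obtain ⟨y, hy⟩ := hex
    have hli : LinearIndependent K ![x, y] := by
      rw [LinearIndependent.pair_iff' hx]
      intro a ha
      apply hy
      rw [← ha, map_smul, halt x, smul_zero]
    set W : Submodule K V := Submodule.span K {x, y} with hW
    have hxW : x ∈ W := subset_span (by simp)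
    have hyW : y ∈ W := subset_span (by simp)
    have hWrank : Module.finrank K W = 2 := by
      have : Set.range ![x, y] = {x, y} := by
        ext z; simp [Matrix.range_cons, Matrix.range_empty, or_comm]
      rw [hW, ← this, finrank_span_eq_card hli]
      simp
    have hrefl : S.IsRefl := halt.isRefl
    have hrestr : (S.restrict W).Nondegenerate := by
      refine (LinearMap.IsRefl.nondegenerate_iff_separatingLeft (B := S.restrict W) (fun a b hab => hrefl _ _ hab)).2 ?_
      rintro ⟨w, hw⟩ h
      have h1 : S w x = 0 := h ⟨x, hxW⟩
      have h2 : S w y = 0 := h ⟨y, hyW⟩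
      obtain ⟨a, b, hab⟩ := Submodule.mem_span_pair.mp hw
      have hswy : S w y = a * S x y := by
        rw [← hab]; simp [halt y]
      have ha : a = 0 := by
        rw [hswy] at h2
        rcases mul_eq_zero.mp h2 with h | h
        · exact h
        · exact absurd h hy
      have hswx : S w x = b * S y x := by
        rw [← hab]; simp [halt x, ha]
      have hyx : S y x ≠ 0 := fun h => hy (hrefl _ _ h)
      have hb : b = 0 := by
        rw [hswx] at h1
        rcases mul_eq_zero.mp h1 with h | h
        · exact h
        · exact absurd h hyx
      apply Subtype.ext
      simp [← hab, ha, hb]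
    have hcompl : IsCompl W (S.orthogonal W) :=
      S.isCompl_orthogonal_of_restrict_nondegenerate hrefl hrestr
    have hrest2 : (S.restrict (S.orthogonal W)).Nondegenerate := by
      apply S.nondegenerate_restrict_of_disjoint_orthogonal hrefl
      rw [S.orthogonal_orthogonal hnd hrefl]
      exact hcompl.disjoint.symm
    have hsum := Submodule.finrank_add_eq_of_isCompl hcompl
    rw [hdim, hWrank] at hsum
    set d := Module.finrank K (S.orthogonal W) with hd
    have hdn : d < n := by omega
    obtain ⟨r, hr⟩ := IH d hdn (S.restrict (S.orthogonal W))
      (fun z => halt z) hrest2 rfl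
    exact ⟨r + 1, by omega⟩

theorem odd_rank_even_of_symmetric_unipotent {K V : Type*} [Field K]
    [AddCommGroup V] [Module K V] [FiniteDimensional K V]
    (hchar : (2 : K) ≠ 0)
    (B : V →ₗ[K] V →ₗ[K] K)
    (hsymm : ∀ x y, B x y = B y x)
    (hreg : B.Nondegenerate)
    (u : V ≃ₗ[K] V)
    (hiso : ∀ x y, B (u x) (u y) = B x y)
    (hnil : IsNilpotent ((u : V →ₗ[K] V) - LinearMap.id)) :
    ∀ k : ℕ, Even (Module.finrank K
      (LinearMap.range (((u : V →ₗ[K] V) - LinearMap.id) ^ (2 * k + 1)))) := by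
  intro k
  set N : Module.End K V := (u : V →ₗ[K] V) - LinearMap.id with hN
  set s : Module.End K V := (2 : K) • (1 : Module.End K V) with hs
  set m := 2 * k + 1 with hm
  -- the unit w = N + 2
  have h2 : IsUnit s := by
    have h2K : IsUnit (2 : K) := isUnit_iff_ne_zero.mpr hchar
    have := h2K.map (algebraMap K (Module.End K V))
    rwa [Algebra.algebraMap_eq_smul_one] at this
  have hcomm : Commute N s := (Commute.one_right N).smul_right (2 : K)
  have hv : IsUnit (N + s) := hnil.isUnit_add_right_of_commute h2 hcomm
  set w := hv.unit with hwdef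
  have hw : (w : Module.End K V) = N + s := hv.unit_spec
  set c : Module.End K V := N * (↑w⁻¹ : Module.End K V) with hc
  -- basic identity from the isometry
  have hu : ∀ a : V, (u : V →ₗ[K] V) a = N a + a := by
    intro a
    simp [hN, LinearMap.sub_apply]
  have hiso' : ∀ a b : V, B (N a) (N b) + B (N a) b + B a (N b) = 0 := by
    intro a b
    have h := hiso a b
    rw [show (u a : V) = (u : V →ₗ[K] V) a from rfl] at h
    rw [show (u b : V) = (u : V →ₗ[K] V) b from rfl] at h
    rw [hu a, hu b] at h
    simp only [map_add, LinearMap.add_apply] at h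
    linear_combination h
  have hkey : ∀ a b : V, B (N a) ((N + s) b) + B ((N + s) a) (N b) = 0 := by
    intro a b
    simp only [LinearMap.add_apply, hs, LinearMap.smul_apply, Module.End.one_apply,
      map_add, map_smul, LinearMap.add_apply, smul_eq_mul]
    linear_combination 2 * hiso' a b
  -- skewness of c
  have hinv1 : (N + s) * (↑w⁻¹ : Module.End K V) = 1 := by
    rw [← hw]; exact w.mul_inv
  have hskew : ∀ x y, B (c x) y = - B x (c y) := by
    intro x y
    set a := (↑w⁻¹ : Module.End K V) x with ha
    set b := (↑w⁻¹ : Module.End K V) y with hb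
    have hxa : (N + s) a = x := by
      rw [ha, ← Module.End.mul_apply, hinv1, Module.End.one_apply]
    have hyb : (N + s) b = y := by
      rw [hb, ← Module.End.mul_apply, hinv1, Module.End.one_apply]
    have hca : c x = N a := by rw [hc, Module.End.mul_apply]
    have hcb : c y = N b := by rw [hc, Module.End.mul_apply]
    rw [hca, hcb, ← hxa, ← hyb]
    linear_combination hkey a b
  have hskewpow : ∀ (j : ℕ) (x y : V), B ((c ^ j) x) y = (-1 : K) ^ j * B x ((c ^ j) y) := by
    intro j
    induction j with
    | zero => intro x y; simp
    | succ j ih =>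
      intro x y
      have e1 : (c ^ (j + 1)) x = (c ^ j) (c x) := by
        rw [pow_succ, Module.End.mul_apply]
      have e2 : (c ^ (j + 1)) y = c ((c ^ j) y) := by
        rw [pow_succ', Module.End.mul_apply]
      rw [e1, ih (c x) y, hskew x ((c ^ j) y), e2, pow_succ]
      ring
  set f : Module.End K V := c ^ m with hf
  have hskewm : ∀ x y, B (f x) y = - B x (f y) := by
    intro x y
    have := hskewpow m x y
    rw [Odd.neg_one_pow ⟨k, by omega⟩] at this
    linear_combination this
  have halt0 : ∀ x, B (f x) x = 0 := by
    intro x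
    have h1 := hskewm x x
    rw [hsymm x (f x)] at h1
    have h2 : (2 : K) * B (f x) x = 0 := by linear_combination h1
    rcases mul_eq_zero.mp h2 with h | h
    · exact absurd h hchar
    · exact h
  -- quotient form
  have hker : ∀ z : V, ∀ x ∈ LinearMap.ker f, B (f z) x = 0 := by
    intro z x hx
    rw [hskewm, LinearMap.mem_ker.mp hx, map_zero, neg_zero]
  let Q := V ⧸ LinearMap.ker f
  have hlift : ∀ (g : V →ₗ[K] K) (h : LinearMap.ker f ≤ LinearMap.ker g) (z : V),
      ((LinearMap.ker f).liftQ g h) (Submodule.Quotient.mk z) = g z := fun _ _ _ => rfl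
  let inner1 : V →ₗ[K] (Q →ₗ[K] K) :=
    { toFun := fun z => (LinearMap.ker f).liftQ (B (f z)) (fun x hx => hker z x hx)
      map_add' := by
        intro a b
        apply LinearMap.ext
        intro q
        obtain ⟨z, rfl⟩ := Submodule.Quotient.mk_surjective _ q
        simp [hlift, map_add]; rfl
      map_smul' := by
        intro r a
        apply LinearMap.ext
        intro q
        obtain ⟨z, rfl⟩ := Submodule.Quotient.mk_surjective _ q
        simp [hlift, map_smul]; exact Or.inl rfl }
  have hinner1 : ∀ z x : V, inner1 z (Submodule.Quotient.mk x) = B (f z) x := by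
    intro z x
    rfl
  let Sbar : Q →ₗ[K] Q →ₗ[K] K :=
    (LinearMap.ker f).liftQ inner1 (by
      intro z hz
      apply LinearMap.ext
      intro q
      obtain ⟨x, rfl⟩ := Submodule.Quotient.mk_surjective _ q
      rw [hinner1, LinearMap.mem_ker.mp hz, map_zero]
      simp)
  have hSbar : ∀ z x : V, Sbar (Submodule.Quotient.mk z) (Submodule.Quotient.mk x) = B (f z) x := by
    intro z x
    rw [show Sbar (Submodule.Quotient.mk z) = inner1 z from Submodule.liftQ_apply _ _ _]
    exact hinner1 z x
  have halt : Sbar.IsAlt := by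
    intro q
    obtain ⟨z, rfl⟩ := Submodule.Quotient.mk_surjective _ q
    rw [hSbar]; exact halt0 z
  have hnd : LinearMap.BilinForm.Nondegenerate Sbar := by
    refine (LinearMap.IsRefl.nondegenerate_iff_separatingLeft halt.isRefl).2 ?_
    intro q h
    obtain ⟨z, rfl⟩ := Submodule.Quotient.mk_surjective _ q
    have hfz : f z = 0 := by
      apply hreg.1
      intro x
      have := h (Submodule.Quotient.mk x)
      rwa [hSbar] at this
    exact (Submodule.Quotient.mk_eq_zero _).mpr (LinearMap.mem_ker.mpr hfz)
  have heven : Even (Module.finrank K Q) :=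
    even_finrank_of_alt_nondeg (Module.finrank K Q) Sbar halt hnd rfl
  -- finrank Q = finrank range f
  have hQ : Module.finrank K Q = Module.finrank K (LinearMap.range f) :=
    LinearEquiv.finrank_eq (f.quotKerEquivRange)
  -- range f = range (N^m)
  have hcommw : Commute N (↑w⁻¹ : Module.End K V) := by
    apply Commute.units_inv_right
    rw [hw]
    exact (Commute.refl N).add_right hcomm
  have hcm : c ^ m = N ^ m * (↑w⁻¹ : Module.End K V) ^ m := hcommw.mul_pow m
  have hrange : LinearMap.range f = LinearMap.range (N ^ m) := by
    rw [hf, hcm, Module.End.mul_eq_comp]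
    apply LinearMap.range_comp_of_range_eq_top
    rw [LinearMap.range_eq_top]
    intro x
    refine ⟨((↑w : Module.End K V) ^ m) x, ?_⟩
    have hone : ((↑w⁻¹ : Module.End K V) ^ m) * ((↑w : Module.End K V) ^ m) = 1 := by
      rw [← Units.val_pow_eq_pow_val, ← Units.val_pow_eq_pow_val, ← Units.val_mul,
        inv_pow, inv_mul_cancel, Units.val_one]
    rw [← Module.End.mul_apply, hone, Module.End.one_apply]
  rw [show ((u : V →ₗ[K] V) - LinearMap.id) ^ (2 * k + 1) = N ^ m from rfl]
  rw [← hrange, ← hQ]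
  exact heven
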